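/- For every Borel measurable set A ⊆ Ω, N_ν(A) → G(A) as ν → ∞ (i.e., the function ν ↦ N_ν(A) tends to G(A) along the atTop filter on the positive reals). -/

import Mathlib

open MeasureTheory Filter Topology

/-- The orthogonality penalty `S(λ) = ∑_{j<k} ⟨λ_j, λ_k⟩²` on K-tuples of
elements of `L²(μ₀)`. -/
noncomputable def nemoS {T : Type*} [MeasurableSpace T] (μ₀ : Measure T) (K : ℕ)
    (l : Fin K → Lp ℝ 2 μ₀) : ℝ :=
  ∑ p ∈ Finset.univ.filter (fun p : Fin K × Fin K => p.1 < p.2),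
    (inner ℝ (l p.1) (l p.2) : ℝ) ^ 2

/-- The NeMO measure of a set `A`, as a real number:
`N_ν(A) = (∫_A exp(-S(λ)/(2ν)) dG) / (∫_Ω exp(-S(λ)/(2ν)) dG)`. -/
noncomputable def nemoN {T : Type*} [MeasurableSpace T] (μ₀ : Measure T) (K : ℕ)
    [MeasurableSpace (Fin K → Lp ℝ 2 μ₀)]
    (G : Measure (Fin K → Lp ℝ 2 μ₀)) (ν : ℝ) (A : Set (Fin K → Lp ℝ 2 μ₀)) : ℝ :=
  (∫ l in A, Real.exp (-(nemoS μ₀ K l) / (2 * ν)) ∂G) /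
    (∫ l, Real.exp (-(nemoS μ₀ K l) / (2 * ν)) ∂G)

lemma nemoS_continuous {T : Type*} [MeasurableSpace T] (μ₀ : Measure T) (K : ℕ) :
    Continuous (nemoS μ₀ K) := by
  unfold nemoS
  apply continuous_finset_sum
  intro p _
  exact ((Continuous.inner (𝕜 := ℝ) (continuous_apply p.1) (continuous_apply p.2))).pow 2

lemma nemoS_nonneg {T : Type*} [MeasurableSpace T] (μ₀ : Measure T) (K : ℕ)
    (l : Fin K → Lp ℝ 2 μ₀) : 0 ≤ nemoS μ₀ K l :=
  Finset.sum_nonneg fun _ _ => sq_nonneg _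

lemma nemo_integral_tendsto {T : Type*} [MeasurableSpace T] (μ₀ : Measure T)
    (K : ℕ) [MeasurableSpace (Fin K → Lp ℝ 2 μ₀)] [BorelSpace (Fin K → Lp ℝ 2 μ₀)]
    (μ : Measure (Fin K → Lp ℝ 2 μ₀)) [IsFiniteMeasure μ] :
    Tendsto (fun ν : ℝ => ∫ l, Real.exp (-(nemoS μ₀ K l) / (2 * ν)) ∂μ) atTop
      (𝓝 (∫ _, (1 : ℝ) ∂μ)) := by
  apply tendsto_integral_filter_of_dominated_convergence (fun _ => (1 : ℝ))
  · filter_upwards with ν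
    exact (Real.continuous_exp.comp
      (((nemoS_continuous μ₀ K).neg).div_const _)).aestronglyMeasurable
  · filter_upwards [eventually_gt_atTop (0 : ℝ)] with ν hν
    filter_upwards with l
    rw [Real.norm_eq_abs, abs_of_pos (Real.exp_pos _)]
    apply Real.exp_le_one_iff.mpr
    apply div_nonpos_of_nonpos_of_nonneg
    · simpa using nemoS_nonneg μ₀ K l
    · linarith
  · exact integrable_const 1
  · filter_upwards with l
    have h1 : Tendsto (fun ν : ℝ => -(nemoS μ₀ K l) / (2 * ν)) atTop (𝓝 0) := by
      simp_rw [div_eq_mul_inv]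
      rw [show (0 : ℝ) = -(nemoS μ₀ K l) * 0 by ring]
      exact Tendsto.const_mul _
        (tendsto_inv_atTop_zero.comp (tendsto_id.const_mul_atTop two_pos))
    simpa [Function.comp_def] using (Real.continuous_exp.tendsto 0).comp h1

/-- Proposition 2: for every Borel measurable set `A`, `N_ν(A) → G(A)` as
`ν → ∞`. -/
theorem nemo_tendsto_of_atTop
    {T : Type*} [MeasurableSpace T] (μ₀ : Measure T) [SigmaFinite μ₀]
    (K : ℕ) (hK : 2 ≤ K)
    [MeasurableSpace (Fin K → Lp ℝ 2 μ₀)] [BorelSpace (Fin K → Lp ℝ 2 μ₀)]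
    (G : Measure (Fin K → Lp ℝ 2 μ₀)) [IsProbabilityMeasure G]
    (A : Set (Fin K → Lp ℝ 2 μ₀)) (hA : MeasurableSet A) :
    Tendsto (fun ν : ℝ => nemoN μ₀ K G ν A) atTop (𝓝 (G A).toReal) := by
  have hnum := nemo_integral_tendsto μ₀ K (G.restrict A)
  have hden := nemo_integral_tendsto μ₀ K G
  rw [integral_const, probReal_univ] at hden
  simp only [ENNReal.toReal_one, one_smul, smul_eq_mul, mul_one] at hden
  rw [integral_const, measureReal_restrict_apply_univ, smul_eq_mul, mul_one] at hnum
  have : (G A).toReal = (G A).toReal / 1 := by ring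
  rw [this]
  exact hnum.div hden one_ne_zero
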